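/- The bootstrap step-size is bounded away from zero on the initial sublevel set: inf{ᾱ(x) : x ∈ relint(X), f(x) ≤ f(x⁰)} > 0, where ᾱ(x) = min{α₀(x), 2β/L} and α₀(x) = min{xᵢ θᵢ''(xᵢ)/rᵢ(x) : rᵢ(x) > 0} (min ∅ = +∞). -/

import Mathlib

open Matrix Filter Set

namespace HBA

noncomputable section

variable {n m : ℕ}

/-- Feasible set `X = {x | Ax = b, x ≥ 0}`. -/
def Feas (A : Matrix (Fin m) (Fin n) ℝ) (b : Fin m → ℝ) : Set (Fin n → ℝ) :=
  {x | A *ᵥ x = b ∧ ∀ i, 0 ≤ x i}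

/-- Relative interior of the feasible set: `{x | Ax = b, x > 0}`. -/
def RelInt (A : Matrix (Fin m) (Fin n) ℝ) (b : Fin m → ℝ) : Set (Fin n → ℝ) :=
  {x | A *ᵥ x = b ∧ ∀ i, 0 < x i}

/-- Euclidean norm on `Fin n → ℝ`. -/
def euclNorm (x : Fin n → ℝ) : ℝ := Real.sqrt (∑ i, (x i) ^ 2)

/-- The linear functional `h ↦ ∑ i, v i * h i`, as a continuous linear map. -/
def toDualCLM (v : Fin n → ℝ) : (Fin n → ℝ) →L[ℝ] ℝ :=
  ∑ i, v i • (ContinuousLinearMap.proj i : (Fin n → ℝ) →L[ℝ] ℝ)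

/-- Hessian metric `H(x) = diag(θ₁''(x₁),…,θₙ''(xₙ))`, where `D i = θᵢ''`. -/
def Hmat (D : Fin n → ℝ → ℝ) (x : Fin n → ℝ) : Matrix (Fin n) (Fin n) ℝ :=
  Matrix.diagonal fun i => D i (x i)

/-- Inverse Hessian metric `H(x)⁻¹ = diag(1/θᵢ''(xᵢ))`. -/
def Hinv (D : Fin n → ℝ → ℝ) (x : Fin n → ℝ) : Matrix (Fin n) (Fin n) ℝ :=
  Matrix.diagonal fun i => (D i (x i))⁻¹

/-- Continuous extension of `H(x)⁻¹` to the boundary, setting `1/θᵢ''(xᵢ) := 0` if `xᵢ = 0`. -/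
def HinvC (D : Fin n → ℝ → ℝ) (x : Fin n → ℝ) : Matrix (Fin n) (Fin n) ℝ :=
  Matrix.diagonal fun i => if x i = 0 then 0 else (D i (x i))⁻¹

/-- Dual variable `y(x) = (A H(x)⁻¹ Aᵀ)⁻¹ A H(x)⁻¹ ∇f(x)`. -/
def dualY (A : Matrix (Fin m) (Fin n) ℝ) (D : Fin n → ℝ → ℝ)
    (g : (Fin n → ℝ) → Fin n → ℝ) (x : Fin n → ℝ) : Fin m → ℝ :=
  (A * Hinv D x * Aᵀ)⁻¹ *ᵥ (A *ᵥ (Hinv D x *ᵥ g x))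

/-- Continuous boundary extension of the dual variable. -/
def dualYC (A : Matrix (Fin m) (Fin n) ℝ) (D : Fin n → ℝ → ℝ)
    (g : (Fin n → ℝ) → Fin n → ℝ) (x : Fin n → ℝ) : Fin m → ℝ :=
  (A * HinvC D x * Aᵀ)⁻¹ *ᵥ (A *ᵥ (HinvC D x *ᵥ g x))

/-- Reduced cost `r(x) = ∇f(x) − Aᵀ y(x)`. -/
def redCost (A : Matrix (Fin m) (Fin n) ℝ) (D : Fin n → ℝ → ℝ)
    (g : (Fin n → ℝ) → Fin n → ℝ) (x : Fin n → ℝ) : Fin n → ℝ :=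
  g x - Aᵀ *ᵥ dualY A D g x

/-- Continuous boundary extension of the reduced cost. -/
def redCostC (A : Matrix (Fin m) (Fin n) ℝ) (D : Fin n → ℝ → ℝ)
    (g : (Fin n → ℝ) → Fin n → ℝ) (x : Fin n → ℝ) : Fin n → ℝ :=
  g x - Aᵀ *ᵥ dualYC A D g x

/-- Search direction `v(x) = −H(x)⁻¹ r(x)`. -/
def searchDir (A : Matrix (Fin m) (Fin n) ℝ) (D : Fin n → ℝ → ℝ)
    (g : (Fin n → ℝ) → Fin n → ℝ) (x : Fin n → ℝ) : Fin n → ℝ :=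
  -(Hinv D x *ᵥ redCost A D g x)

/-- The squared local norm `‖z‖ₓ² = zᵀ H(x) z`. -/
def xnorm2 (D : Fin n → ℝ → ℝ) (x z : Fin n → ℝ) : ℝ := z ⬝ᵥ (Hmat D x *ᵥ z)

/-- Bootstrap step-size `ᾱ(x) = min{α₀(x), 2β/L}`, where
`α₀(x) = min{xᵢθᵢ''(xᵢ)/rᵢ(x) : rᵢ(x) > 0}` and `min ∅ = +∞`. -/
def alphaBar (A : Matrix (Fin m) (Fin n) ℝ) (D : Fin n → ℝ → ℝ)
    (g : (Fin n → ℝ) → Fin n → ℝ) (β Lf : ℝ) (x : Fin n → ℝ) : ℝ :=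
  sInf (insert (2 * β / Lf)
    {a : ℝ | ∃ i, 0 < redCost A D g x i ∧ a = x i * D i (x i) / redCost A D g x i})

/-- The Armijo sufficient-decrease condition at backtracking exponent `l`:
`f(x + δ^l ᾱ(x) v(x)) − f(x) ≤ −μ δ^l ᾱ(x) ‖v(x)‖ₓ²`. -/
def armijoCond (A : Matrix (Fin m) (Fin n) ℝ) (D : Fin n → ℝ → ℝ)
    (g : (Fin n → ℝ) → Fin n → ℝ) (f : (Fin n → ℝ) → ℝ) (β Lf μ δ : ℝ)
    (x : Fin n → ℝ) (l : ℕ) : Prop :=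
  f (x + (δ ^ l * alphaBar A D g β Lf x) • searchDir A D g x) - f x ≤
    -(μ * (δ ^ l * alphaBar A D g β Lf x) * xnorm2 D x (searchDir A D g x))

/-- The Armijo step-size `α(x) = δ^ℓ ᾱ(x)`, `ℓ` the smallest exponent giving sufficient decrease. -/
def stepSize (A : Matrix (Fin m) (Fin n) ℝ) (D : Fin n → ℝ → ℝ)
    (g : (Fin n → ℝ) → Fin n → ℝ) (f : (Fin n → ℝ) → ℝ) (β Lf μ δ : ℝ)
    (x : Fin n → ℝ) : ℝ :=
  δ ^ sInf {l : ℕ | armijoCond A D g f β Lf μ δ x l} * alphaBar A D g β Lf x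

/-- The iterates of the Hessian barrier algorithm: `x⁰ = x0`, `x^{k+1} = x^k + α(x^k) v(x^k)`. -/
def hba (A : Matrix (Fin m) (Fin n) ℝ) (D : Fin n → ℝ → ℝ)
    (g : (Fin n → ℝ) → Fin n → ℝ) (f : (Fin n → ℝ) → ℝ) (β Lf μ δ : ℝ)
    (x0 : Fin n → ℝ) : ℕ → Fin n → ℝ
  | 0 => x0
  | k + 1 =>
      hba A D g f β Lf μ δ x0 k
        + stepSize A D g f β Lf μ δ (hba A D g f β Lf μ δ x0 k)
            • searchDir A D g (hba A D g f β Lf μ δ x0 k)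

end

end HBA


section AuxStmt4

open Matrix Filter Set

lemma aux_transpose_mulVec_eq_zero {n m : ℕ} (A : Matrix (Fin m) (Fin n) ℝ)
    (hrank : A.rank = m) {v : Fin m → ℝ} (hv : Aᵀ *ᵥ v = 0) : v = 0 := by
  have hrt : Aᵀ.rank = m := by rw [Matrix.rank_transpose, hrank]
  rw [Matrix.rank] at hrt
  have h2 := LinearMap.finrank_range_add_finrank_ker (Matrix.mulVecLin Aᵀ)
  rw [Module.finrank_fin_fun, hrt] at h2
  have hker : LinearMap.ker (Matrix.mulVecLin Aᵀ) = ⊥ := by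
    have h3 : Module.finrank ℝ (LinearMap.ker (Matrix.mulVecLin Aᵀ)) = 0 := by omega
    exact Submodule.finrank_eq_zero.mp h3
  have hvmem : v ∈ LinearMap.ker (Matrix.mulVecLin Aᵀ) := by
    rw [LinearMap.mem_ker, Matrix.mulVecLin_apply]
    exact hv
  rw [hker] at hvmem
  simpa using hvmem

lemma aux_normal_eq {n m : ℕ} (A : Matrix (Fin m) (Fin n) ℝ) (hrank : A.rank = m)
    (D : Fin n → ℝ → ℝ) (g : (Fin n → ℝ) → Fin n → ℝ) (x : Fin n → ℝ)
    (hD : ∀ i, 0 < D i (x i)) :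
    A *ᵥ (HBA.Hinv D x *ᵥ HBA.redCost A D g x) = 0 := by
  classical
  have hdet : IsUnit (A * HBA.Hinv D x * Aᵀ).det := by
    rw [isUnit_iff_ne_zero]
    intro h0
    obtain ⟨v, hvne, hv⟩ := Matrix.exists_mulVec_eq_zero_iff.mpr h0
    have h1 : (Aᵀ *ᵥ v) ⬝ᵥ (HBA.Hinv D x *ᵥ (Aᵀ *ᵥ v)) = 0 := by
      calc (Aᵀ *ᵥ v) ⬝ᵥ (HBA.Hinv D x *ᵥ (Aᵀ *ᵥ v))
          = (v ᵥ* A) ⬝ᵥ (HBA.Hinv D x *ᵥ (Aᵀ *ᵥ v)) := by rw [Matrix.mulVec_transpose]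
        _ = v ⬝ᵥ (A *ᵥ (HBA.Hinv D x *ᵥ (Aᵀ *ᵥ v))) := (Matrix.dotProduct_mulVec _ _ _).symm
        _ = v ⬝ᵥ ((A * HBA.Hinv D x * Aᵀ) *ᵥ v) := by simp only [Matrix.mulVec_mulVec, Matrix.mul_assoc]
        _ = 0 := by rw [hv, dotProduct_zero]
    have h1' : ∑ i, (Aᵀ *ᵥ v) i * ((D i (x i))⁻¹ * (Aᵀ *ᵥ v) i) = 0 := by
      have := h1
      simp only [dotProduct, HBA.Hinv, Matrix.mulVec_diagonal] at this
      exact this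
    have h3 : ∑ i, (D i (x i))⁻¹ * ((Aᵀ *ᵥ v) i) ^ 2 = 0 :=
      (Finset.sum_congr rfl fun i _ => by ring).trans h1'
    have h4 := (Finset.sum_eq_zero_iff_of_nonneg fun i _ =>
      mul_nonneg (inv_nonneg.mpr (hD i).le) (sq_nonneg _)).mp h3
    have h5 : Aᵀ *ᵥ v = 0 := by
      funext i
      have h6 := h4 i (Finset.mem_univ i)
      have h7 : (D i (x i))⁻¹ ≠ 0 := (inv_pos.mpr (hD i)).ne'
      have h8 : ((Aᵀ *ᵥ v) i) ^ 2 = 0 := by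
        rcases mul_eq_zero.mp h6 with h | h
        · exact absurd h h7
        · exact h
      exact (pow_eq_zero_iff two_ne_zero).mp h8
    exact hvne (aux_transpose_mulVec_eq_zero A hrank h5)
  have hred : HBA.redCost A D g x = g x - Aᵀ *ᵥ HBA.dualY A D g x := rfl
  rw [hred, Matrix.mulVec_sub, Matrix.mulVec_sub]
  have h9 : A *ᵥ (HBA.Hinv D x *ᵥ (Aᵀ *ᵥ HBA.dualY A D g x)) = A *ᵥ (HBA.Hinv D x *ᵥ g x) := by
    rw [HBA.dualY]
    simp only [Matrix.mulVec_mulVec, ← Matrix.mul_assoc]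
    rw [Matrix.mul_nonsing_inv _ hdet, Matrix.one_mul]
  rw [h9, sub_self]

lemma aux_abs_le_euclNorm {n : ℕ} (v : Fin n → ℝ) (i : Fin n) : |v i| ≤ HBA.euclNorm v := by
  rw [HBA.euclNorm, ← Real.sqrt_sq_eq_abs]
  exact Real.sqrt_le_sqrt (Finset.single_le_sum (f := fun j => (v j) ^ 2)
    (fun j _ => sq_nonneg _) (Finset.mem_univ i))

lemma aux_euclNorm_le {n : ℕ} (v : Fin n → ℝ) (C : ℝ) (hC : 0 ≤ C)
    (h : ∀ i, |v i| ≤ C) : HBA.euclNorm v ≤ Real.sqrt n * C := by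
  rw [HBA.euclNorm]
  have h1 : ∑ i, (v i) ^ 2 ≤ (n : ℝ) * C ^ 2 := by
    calc ∑ i, (v i) ^ 2 ≤ ∑ _i : Fin n, C ^ 2 :=
          Finset.sum_le_sum fun i _ => sq_le_sq' (abs_le.mp (h i)).1 (abs_le.mp (h i)).2
      _ = (n : ℝ) * C ^ 2 := by
          simp [Finset.sum_const, Finset.card_univ, nsmul_eq_mul]
  calc Real.sqrt (∑ i, (v i) ^ 2) ≤ Real.sqrt ((n : ℝ) * C ^ 2) := Real.sqrt_le_sqrt h1
    _ = Real.sqrt n * C := by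
        rw [Real.sqrt_mul (by positivity), Real.sqrt_sq hC]

end AuxStmt4

set_option maxHeartbeats 2000000 in
open Matrix Filter Set in
theorem stmt4
    {n m : ℕ}
    (A : Matrix (Fin m) (Fin n) ℝ) (b : Fin m → ℝ)
    (hrank : A.rank = m)
    (f : (Fin n → ℝ) → ℝ) (g : (Fin n → ℝ) → Fin n → ℝ)
    (hgrad : ∀ x ∈ HBA.Feas A b, HasFDerivAt f (HBA.toDualCLM (g x)) x)
    (Lf : ℝ) (hLf : 0 < Lf)
    (hLip : ∀ x ∈ HBA.Feas A b, ∀ x' ∈ HBA.Feas A b,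
      HBA.euclNorm (g x - g x') ≤ Lf * HBA.euclNorm (x - x'))
    (x0 : Fin n → ℝ) (hx0 : x0 ∈ HBA.RelInt A b)
    (hbdd : Bornology.IsBounded {x | x ∈ HBA.Feas A b ∧ f x ≤ f x0})
    (θ θd D : Fin n → ℝ → ℝ)
    (hθ1 : ∀ i, ∀ t ∈ Set.Ioi (0:ℝ), HasDerivAt (θ i) (θd i t) t)
    (hθ2 : ∀ i, ∀ t ∈ Set.Ioi (0:ℝ), HasDerivAt (θd i) (D i t) t)
    (hDpos : ∀ i, ∀ t ∈ Set.Ioi (0:ℝ), 0 < D i t)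
    (hDlip : ∀ i, ∀ t ∈ Set.Ioi (0:ℝ), ∃ r > (0:ℝ), ∃ K : NNReal,
      LipschitzOnWith K (D i) (Set.Ioo (t - r) (t + r) ∩ Set.Ioi 0))
    (hsteep : ∀ i, Filter.Tendsto (θd i) (nhdsWithin (0:ℝ) (Set.Ioi 0)) Filter.atBot)
    (β : ℝ) (hβ : 0 < β) (hDβ : ∀ i, ∀ t ∈ Set.Ioi (0:ℝ), β ≤ D i t)
    (ε : ℝ) (hε : 0 < ε) (hDε : ∀ i, ∀ t ∈ Set.Ioi (0:ℝ), ε ≤ t * D i t)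
    :
    ∃ c > (0:ℝ), ∀ x, x ∈ HBA.RelInt A b → f x ≤ f x0 →
      c ≤ HBA.alphaBar A D g β Lf x := by
  classical
  by_contra hcon
  push_neg at hcon
  -- hcon : ∀ c, 0 < c → ∃ x, x ∈ RelInt ∧ f x ≤ f x0 ∧ alphaBar ... x < c
  have hRF : ∀ x, x ∈ HBA.RelInt A b → x ∈ HBA.Feas A b :=
    fun x hx => ⟨hx.1, fun i => (hx.2 i).le⟩
  have hx0F : x0 ∈ HBA.Feas A b := hRF x0 hx0
  obtain ⟨Mx, hMx⟩ := isBounded_iff_forall_norm_le.mp hbdd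
  have hMx0 : ‖x0‖ ≤ Mx := hMx x0 ⟨hx0F, le_rfl⟩
  have hMxnn : 0 ≤ Mx := le_trans (norm_nonneg _) hMx0
  set G : ℝ := Lf * (Real.sqrt n * (Mx + Mx)) + HBA.euclNorm (g x0) with hGdef
  have hG0 : 0 ≤ G := by
    have h1 : 0 ≤ HBA.euclNorm (g x0) := Real.sqrt_nonneg _
    have h2 : (0:ℝ) ≤ Real.sqrt n * (Mx + Mx) := by positivity
    nlinarith
  have hG : ∀ x, x ∈ HBA.RelInt A b → f x ≤ f x0 → ∀ i, |g x i| ≤ G := by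
    intro x hx hfx i
    have hxF := hRF x hx
    have hxM : ‖x‖ ≤ Mx := hMx x ⟨hxF, hfx⟩
    have hdiff : ∀ j, |(x - x0) j| ≤ Mx + Mx := by
      intro j
      have h1 : |x j| ≤ ‖x‖ := by simpa using norm_le_pi_norm x j
      have h2 : |x0 j| ≤ ‖x0‖ := by simpa using norm_le_pi_norm x0 j
      have h3 : |x j - x0 j| ≤ |x j| + |x0 j| := by
        have := abs_add_le (x j) (-(x0 j))
        simpa [sub_eq_add_neg, abs_neg] using this
      have h4 : (x - x0) j = x j - x0 j := rfl
      rw [h4]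
      linarith
    have hLipx := hLip x hxF x0 hx0F
    have heN : HBA.euclNorm (x - x0) ≤ Real.sqrt n * (Mx + Mx) :=
      aux_euclNorm_le _ _ (by positivity) hdiff
    have h3 : |g x i - g x0 i| ≤ Lf * (Real.sqrt n * (Mx + Mx)) := by
      have h4 : |(g x - g x0) i| ≤ HBA.euclNorm (g x - g x0) := aux_abs_le_euclNorm _ i
      have h5 : HBA.euclNorm (g x - g x0) ≤ Lf * (Real.sqrt n * (Mx + Mx)) :=
        hLipx.trans (mul_le_mul_of_nonneg_left heN hLf.le)
      have h6 : (g x - g x0) i = g x i - g x0 i := rfl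
      rw [h6] at h4
      linarith
    have h5 : |g x0 i| ≤ HBA.euclNorm (g x0) := aux_abs_le_euclNorm _ i
    have h7 := abs_sub_abs_le_abs_sub (g x i) (g x0 i)
    rw [hGdef]
    linarith
  -- bound on `Aᵀ *ᵥ y`
  set CA : ℝ := (∑ j : Fin m, ∑ i : Fin n, |A j i|) + 1 with hCAdef
  have hCA1 : 1 ≤ CA := by
    have h1 : (0:ℝ) ≤ ∑ j : Fin m, ∑ i : Fin n, |A j i| :=
      Finset.sum_nonneg fun j _ => Finset.sum_nonneg fun i _ => abs_nonneg _
    rw [hCAdef]; linarith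
  have hCApos : 0 < CA := lt_of_lt_of_le one_pos hCA1
  have hCA : ∀ (y : Fin m → ℝ) (i : Fin n), |(Aᵀ *ᵥ y) i| ≤ CA * ‖y‖ := by
    intro y i
    have h1 : (Aᵀ *ᵥ y) i = ∑ j, A j i * y j := by
      simp [Matrix.mulVec, dotProduct, Matrix.transpose_apply]
    rw [h1]
    calc |∑ j, A j i * y j| ≤ ∑ j, |A j i * y j| := Finset.abs_sum_le_sum_abs _ _
      _ ≤ ∑ j, |A j i| * ‖y‖ := Finset.sum_le_sum fun j _ => by
          rw [abs_mul]
          exact mul_le_mul_of_nonneg_left (by simpa using norm_le_pi_norm y j) (abs_nonneg _)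
      _ = (∑ j, |A j i|) * ‖y‖ := (Finset.sum_mul _ _ _).symm
      _ ≤ CA * ‖y‖ := by
          apply mul_le_mul_of_nonneg_right _ (norm_nonneg _)
          have h2 : ∑ j, |A j i| ≤ ∑ j : Fin m, ∑ i' : Fin n, |A j i'| :=
            Finset.sum_le_sum fun j _ =>
              Finset.single_le_sum (f := fun i' => |A j i'|) (fun _ _ => abs_nonneg _)
                (Finset.mem_univ i)
          rw [hCAdef]; linarith
  -- choose the bad sequence
  have hseq : ∀ k : ℕ, ∃ x, x ∈ HBA.RelInt A b ∧ f x ≤ f x0 ∧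
      HBA.alphaBar A D g β Lf x < min (β / Lf) (ε / ((k : ℝ) + 2 + G)) := by
    intro k
    apply hcon
    have hk : (0:ℝ) ≤ (k : ℝ) := Nat.cast_nonneg k
    exact lt_min (div_pos hβ hLf) (div_pos hε (by linarith))
  choose X hX1 hX2 hX3 using hseq
  have hkey : ∀ k : ℕ, ∃ i, 0 < HBA.redCost A D g (X k) i ∧
      (k : ℝ) + 2 + G < HBA.redCost A D g (X k) i := by
    intro k
    have h3 := hX3 k
    rw [HBA.alphaBar] at h3
    have hne : (insert (2 * β / Lf) {a : ℝ | ∃ i, 0 < HBA.redCost A D g (X k) i ∧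
        a = X k i * D i (X k i) / HBA.redCost A D g (X k) i}).Nonempty :=
      ⟨2 * β / Lf, Set.mem_insert _ _⟩
    obtain ⟨a, ha, halt⟩ := exists_lt_of_csInf_lt hne h3
    have hmin1 : min (β / Lf) (ε / ((k : ℝ) + 2 + G)) ≤ β / Lf := min_le_left _ _
    have hmin2 : min (β / Lf) (ε / ((k : ℝ) + 2 + G)) ≤ ε / ((k : ℝ) + 2 + G) :=
      min_le_right _ _
    rcases Set.mem_insert_iff.mp ha with ha | ⟨i, hri, haeq⟩
    · exfalso
      have h5 : 0 < β / Lf := div_pos hβ hLf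
      have h6 : 2 * β / Lf = β / Lf + β / Lf := by ring
      rw [ha] at halt
      have := halt.trans_le hmin1
      rw [h6] at this
      linarith
    · refine ⟨i, hri, ?_⟩
      have hxi : 0 < X k i := (hX1 k).2 i
      have hεx : ε ≤ X k i * D i (X k i) := hDε i _ hxi
      have hk : (0:ℝ) ≤ (k : ℝ) := Nat.cast_nonneg k
      have hdk : 0 < (k : ℝ) + 2 + G := by linarith
      have halt2 : a < ε / ((k : ℝ) + 2 + G) := lt_of_lt_of_le halt hmin2
      rw [haeq] at halt2
      rw [div_lt_div_iff₀ hri hdk] at halt2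
      have h6 : ε * ((k : ℝ) + 2 + G) ≤ X k i * D i (X k i) * ((k : ℝ) + 2 + G) :=
        mul_le_mul_of_nonneg_right hεx hdk.le
      have h7 : ε * ((k : ℝ) + 2 + G) < ε * HBA.redCost A D g (X k) i := by linarith
      exact (mul_lt_mul_iff_right₀ hε).mp h7
  choose I hI1 hI2 using hkey
  set Y : ℕ → Fin m → ℝ := fun k => HBA.dualY A D g (X k) with hYdef
  have hAYI : ∀ (k : ℕ) (i : Fin n),
      (Aᵀ *ᵥ Y k) i = g (X k) i - HBA.redCost A D g (X k) i := by
    intro k i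
    have h1 : HBA.redCost A D g (X k) i = g (X k) i - (Aᵀ *ᵥ Y k) i := rfl
    rw [h1]; ring
  have hYlb : ∀ k : ℕ, ((k : ℝ) + 2) ≤ CA * ‖Y k‖ := by
    intro k
    have h1 : (Aᵀ *ᵥ Y k) (I k) ≤ G - ((k : ℝ) + 2 + G) := by
      rw [hAYI k (I k)]
      have h2 := hG (X k) (hX1 k) (hX2 k) (I k)
      have h3 := hI2 k
      have h4 := abs_le.mp h2
      linarith [h4.2]
    have h4 : ((k : ℝ) + 2) ≤ |(Aᵀ *ᵥ Y k) (I k)| :=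
      le_abs.mpr (Or.inr (by linarith))
    exact h4.trans (hCA (Y k) (I k))
  have hYpos : ∀ k : ℕ, 0 < ‖Y k‖ := by
    intro k
    rcases (norm_nonneg (Y k)).lt_or_eq with h | h
    · exact h
    · exfalso
      have h1 := hYlb k
      rw [← h, mul_zero] at h1
      have hk : (0:ℝ) ≤ (k : ℝ) := Nat.cast_nonneg k
      linarith
  set U : ℕ → Fin m → ℝ := fun k => ‖Y k‖⁻¹ • Y k with hUdef
  have hUsph : ∀ k, U k ∈ Metric.sphere (0 : Fin m → ℝ) 1 := by
    intro k
    rw [mem_sphere_zero_iff_norm]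
    show ‖‖Y k‖⁻¹ • Y k‖ = 1
    rw [norm_smul, norm_inv, norm_norm]
    exact inv_mul_cancel₀ (hYpos k).ne'
  obtain ⟨u, humem, φ, hφmono, hUconv⟩ :=
    (isCompact_sphere (0 : Fin m → ℝ) 1).tendsto_subseq hUsph
  have hunorm : ‖u‖ = 1 := mem_sphere_zero_iff_norm.mp humem
  set w : Fin n → ℝ := Aᵀ *ᵥ u with hwdef
  have hwne : w ≠ 0 := by
    intro h0
    have h1 := aux_transpose_mulVec_eq_zero A hrank h0
    rw [h1] at hunorm
    simp at hunorm
  obtain ⟨i0, hi0⟩ : ∃ i0, w i0 ≠ 0 := Function.ne_iff.mp hwne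
  have hYU : ∀ k, Y k = ‖Y k‖ • U k := by
    intro k
    show Y k = ‖Y k‖ • (‖Y k‖⁻¹ • Y k)
    rw [smul_smul, mul_inv_cancel₀ (hYpos k).ne', one_smul]
  -- the orthogonality identity
  have hEid : ∀ k : ℕ,
      ∑ i, w i * ((D i (X k i))⁻¹ * HBA.redCost A D g (X k) i) = 0 := by
    intro k
    have hne := aux_normal_eq A hrank D g (X k) (fun i => hDpos i _ ((hX1 k).2 i))
    have h1 : HBA.Hinv D (X k) *ᵥ HBA.redCost A D g (X k) =
        fun i => (D i (X k i))⁻¹ * HBA.redCost A D g (X k) i := by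
      funext i
      simp [HBA.Hinv, Matrix.mulVec_diagonal]
    rw [h1] at hne
    calc ∑ i, w i * ((D i (X k i))⁻¹ * HBA.redCost A D g (X k) i)
        = (Aᵀ *ᵥ u) ⬝ᵥ (fun i => (D i (X k i))⁻¹ * HBA.redCost A D g (X k) i) := by
          rw [← hwdef]; simp [dotProduct]
      _ = (u ᵥ* A) ⬝ᵥ (fun i => (D i (X k i))⁻¹ * HBA.redCost A D g (X k) i) := by
          rw [Matrix.mulVec_transpose]
      _ = u ⬝ᵥ (A *ᵥ fun i => (D i (X k i))⁻¹ * HBA.redCost A D g (X k) i) :=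
          (Matrix.dotProduct_mulVec _ _ _).symm
      _ = 0 := by rw [hne, dotProduct_zero]
  -- eventual negativity of the relevant terms
  have hterm : ∀ i : Fin n, w i ≠ 0 →
      ∀ᶠ t in atTop, w i * HBA.redCost A D g (X (φ t)) i < 0 := by
    intro i hwi
    have hcont : Continuous fun v : Fin m → ℝ => (Aᵀ *ᵥ v) i := by
      simp only [Matrix.mulVec, dotProduct]
      exact continuous_finset_sum _ fun j _ => continuous_const.mul (continuous_apply j)
    have h1 : Tendsto (fun t => (Aᵀ *ᵥ U (φ t)) i) atTop (nhds (w i)) := by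
      have h2 := (hcont.tendsto u).comp hUconv
      simpa [hwdef, Function.comp_def] using h2
    have h2 : Tendsto (fun t => w i * (Aᵀ *ᵥ U (φ t)) i) atTop (nhds (w i * w i)) :=
      h1.const_mul _
    have hc0 : 0 < w i * w i := mul_self_pos.mpr hwi
    have h3 : ∀ᶠ t in atTop, w i * w i / 2 < w i * (Aᵀ *ᵥ U (φ t)) i :=
      h2.eventually_const_lt (by linarith)
    set c0 : ℝ := w i * w i / 2 with hc0def
    have hc0pos : 0 < c0 := by rw [hc0def]; linarith
    have hYbig : ∀ᶠ t in atTop, (|w i| * G + 1) / c0 ≤ ‖Y (φ t)‖ := by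
      have h4 : ∀ t : ℕ, ((t : ℝ) + 2) / CA ≤ ‖Y (φ t)‖ := by
        intro t
        have h5 := hYlb (φ t)
        have h6 : (t : ℝ) ≤ (φ t : ℝ) := Nat.cast_le.mpr hφmono.le_apply
        rw [div_le_iff₀ hCApos]
        nlinarith
      have h7 : Tendsto (fun t : ℕ => ((t : ℝ) + 2) / CA) atTop atTop :=
        Tendsto.atTop_div_const hCApos
          (tendsto_atTop_add_const_right _ _ tendsto_natCast_atTop_atTop)
      filter_upwards [h7.eventually_ge_atTop ((|w i| * G + 1) / c0)] with t ht
      exact ht.trans (h4 t)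
    filter_upwards [h3, hYbig] with t h3t hYt
    have hg := hG (X (φ t)) (hX1 _) (hX2 _) i
    have hrr : HBA.redCost A D g (X (φ t)) i = g (X (φ t)) i - (Aᵀ *ᵥ Y (φ t)) i := rfl
    have hAYU : (Aᵀ *ᵥ Y (φ t)) i = ‖Y (φ t)‖ * (Aᵀ *ᵥ U (φ t)) i := by
      conv_lhs => rw [hYU (φ t)]
      rw [Matrix.mulVec_smul]
      simp [smul_eq_mul]
    rw [hrr, mul_sub, hAYU]
    have hwg : w i * g (X (φ t)) i ≤ |w i| * G := by
      calc w i * g (X (φ t)) i ≤ |w i * g (X (φ t)) i| := le_abs_self _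
        _ = |w i| * |g (X (φ t)) i| := abs_mul _ _
        _ ≤ |w i| * G := mul_le_mul_of_nonneg_left hg (abs_nonneg _)
    have hbig : |w i| * G + 1 ≤ ‖Y (φ t)‖ * (w i * (Aᵀ *ᵥ U (φ t)) i) := by
      calc |w i| * G + 1 = ((|w i| * G + 1) / c0) * c0 :=
            (div_mul_cancel₀ _ hc0pos.ne').symm
        _ ≤ ‖Y (φ t)‖ * c0 := mul_le_mul_of_nonneg_right hYt hc0pos.le
        _ ≤ ‖Y (φ t)‖ * (w i * (Aᵀ *ᵥ U (φ t)) i) :=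
            mul_le_mul_of_nonneg_left h3t.le (norm_nonneg _)
    nlinarith
  have hallev : ∀ᶠ t in atTop, ∀ i : Fin n,
      w i ≠ 0 → w i * HBA.redCost A D g (X (φ t)) i < 0 := by
    rw [eventually_all]
    intro i
    by_cases hwi : w i = 0
    · filter_upwards with t hne
      exact absurd hwi hne
    · exact (hterm i hwi).mono fun t ht _ => ht
  obtain ⟨t, ht⟩ := hallev.exists
  have hsum := hEid (φ t)
  have hneg : ∑ i, w i * ((D i (X (φ t) i))⁻¹ * HBA.redCost A D g (X (φ t)) i) < 0 := by
    have hle : ∀ i ∈ Finset.univ,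
        w i * ((D i (X (φ t) i))⁻¹ * HBA.redCost A D g (X (φ t)) i) ≤ (0 : ℝ) := by
      intro i _
      by_cases hwi : w i = 0
      · simp [hwi]
      · have h1 := ht i hwi
        have hDi : 0 < (D i (X (φ t) i))⁻¹ := inv_pos.mpr (hDpos i _ ((hX1 _).2 i))
        nlinarith [mul_pos hDi (neg_pos.mpr h1)]
    have hlt : ∃ i ∈ Finset.univ,
        w i * ((D i (X (φ t) i))⁻¹ * HBA.redCost A D g (X (φ t)) i) < (0 : ℝ) := by
      refine ⟨i0, Finset.mem_univ _, ?_⟩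
      have h1 := ht i0 hi0
      have hDi : 0 < (D i0 (X (φ t) i0))⁻¹ := inv_pos.mpr (hDpos i0 _ ((hX1 _).2 i0))
      nlinarith [mul_pos hDi (neg_pos.mpr h1)]
    calc ∑ i, w i * ((D i (X (φ t) i))⁻¹ * HBA.redCost A D g (X (φ t)) i)
        < ∑ _i : Fin n, (0 : ℝ) := Finset.sum_lt_sum hle hlt
      _ = 0 := by simp
  linarith
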